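/- Let a, b be positive integers and s₁, s₂, s₃ real numbers large enough for absolute convergence. Then ζ_{sl(4)}(a,0,s₂,s₁,b,s₃) = ∑_{i=1}^{a} C(a+b−i−1, b−1) ζ_{sl(4)}(i,0,s₂,s₁,0,s₃+a+b−i) + ∑_{i=1}^{b} C(a+b−i−1, a−1) ζ_{sl(4)}(0,0,s₂,s₁,i,s₃+a+b−i). -/

import Mathlib

noncomputable def wittenSl4R (s₁ s₂ s₃ s₄ s₅ s₆ : ℝ) : ℝ :=
  ∑' (n₁ : ℕ) (n₂ : ℕ) (n₃ : ℕ),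
    1 / ((n₁ + 1 : ℝ) ^ s₁ * (n₂ + 1 : ℝ) ^ s₂ * (n₃ + 1 : ℝ) ^ s₃ *
      (n₁ + n₂ + 2 : ℝ) ^ s₄ * (n₂ + n₃ + 2 : ℝ) ^ s₅ * (n₁ + n₂ + n₃ + 3 : ℝ) ^ s₆)

open Finset Real


lemma base_uv (u v : ℝ) (hu : 0 < u) (hv : 0 < v) :
    1/(u*v) = 1/(u*(u+v)) + 1/(v*(u+v)) := by
  have hw : 0 < u + v := by linarith
  field_simp
  ring

lemma pfrac0 (u v : ℝ) (hu : 0 < u) (hv : 0 < v) (B : ℕ) :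
    1/(u * v^(B+1)) = 1/(u * (u+v)^(B+1)) +
      ∑ j ∈ range (B+1), 1/(v^(B+1-j) * (u+v)^(1+j)) := by
  have hw : 0 < u + v := by linarith
  induction B with
  | zero => simpa using base_uv u v hu hv
  | succ B ih =>
    have h1 : 1/(u * v^(B+2)) = (1/v) * (1/(u * v^(B+1))) := by
      rw [pow_succ]; field_simp
    rw [h1, ih, mul_add, Finset.mul_sum]
    have h2 : (1/v) * (1/(u * (u+v)^(B+1))) =
        1/(u * (u+v)^(B+2)) + 1/(v * (u+v)^(B+2)) := by
      have := base_uv u v hu hv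
      have h3 : (1/v) * (1/(u * (u+v)^(B+1))) = (1/(u*v)) * (1/(u+v)^(B+1)) := by
        field_simp
      rw [h3, this, add_mul]
      rw [pow_succ]
      field_simp
      ring
    rw [h2]
    have h4 : ∀ j ∈ range (B+1), (1/v) * (1/(v^(B+1-j) * (u+v)^(1+j))) =
        1/(v^(B+2-j) * (u+v)^(1+j)) := by
      intro j hj
      simp only [mem_range] at hj
      have : B+2-j = (B+1-j)+1 := by omega
      rw [this, pow_succ]
      field_simp
    rw [Finset.sum_congr rfl h4]
    conv_rhs => rw [show B+1+1 = (B+1)+1 from rfl, Finset.sum_range_succ]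
    have h5 : B+1+1-(B+1) = 1 := by omega
    rw [h5]
    have h6 : ∀ j ∈ range (B+1), (1:ℝ)/(v^(B+2-j) * (u+v)^(1+j)) = 1/(v^(B+1+1-j) * (u+v)^(1+j)) := by
      intro j hj; norm_num
    rw [Finset.sum_congr rfl h6]
    ring

lemma sum_step (x w : ℝ) (hx : 0 < x) (hw : 0 < w) (m M : ℕ) :
    (1/w) * (∑ j ∈ range (M+1), (Nat.choose (m+1+j) (m+1) : ℝ) / (x^(M+1-j) * w^(m+2+j))) +
    (1/w) * (∑ j ∈ range (M+2), (Nat.choose (m+j) m : ℝ) / (x^(M+2-j) * w^(m+1+j))) =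
    ∑ j ∈ range (M+2), (Nat.choose (m+1+j) (m+1) : ℝ) / (x^(M+2-j) * w^(m+2+j)) := by
  have hxne : x ≠ 0 := ne_of_gt hx
  have hwne : w ≠ 0 := ne_of_gt hw
  have hpas : ∀ j : ℕ, (Nat.choose (m+1+j) (m+1) : ℝ) =
      (Nat.choose (m+j) m : ℝ) + (Nat.choose (m+j) (m+1) : ℝ) := by
    intro j
    rw [show m+1+j = (m+j)+1 by omega, Nat.choose_succ_succ (m+j) m]
    push_cast; ring
  have hsplit : ∑ j ∈ range (M+2), (Nat.choose (m+1+j) (m+1) : ℝ) / (x^(M+2-j) * w^(m+2+j)) =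
      (∑ j ∈ range (M+2), (Nat.choose (m+j) m : ℝ) / (x^(M+2-j) * w^(m+2+j))) +
      (∑ j ∈ range (M+2), (Nat.choose (m+j) (m+1) : ℝ) / (x^(M+2-j) * w^(m+2+j))) := by
    rw [← Finset.sum_add_distrib]
    refine Finset.sum_congr rfl fun j _ => ?_
    rw [hpas j, add_div]
  have hA : (1/w) * (∑ j ∈ range (M+2), (Nat.choose (m+j) m : ℝ) / (x^(M+2-j) * w^(m+1+j))) =
      ∑ j ∈ range (M+2), (Nat.choose (m+j) m : ℝ) / (x^(M+2-j) * w^(m+2+j)) := by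
    rw [Finset.mul_sum]
    refine Finset.sum_congr rfl fun j hj => ?_
    rw [show m+2+j = (m+1+j)+1 by omega, pow_succ]
    have h1 : x^(M+2-j) ≠ 0 := pow_ne_zero _ hxne
    have h2 : w^(m+1+j) ≠ 0 := pow_ne_zero _ hwne
    field_simp
  have hB : (1/w) * (∑ j ∈ range (M+1), (Nat.choose (m+1+j) (m+1) : ℝ) / (x^(M+1-j) * w^(m+2+j))) =
      ∑ j ∈ range (M+2), (Nat.choose (m+j) (m+1) : ℝ) / (x^(M+2-j) * w^(m+2+j)) := by
    conv_rhs => rw [show M+2 = (M+1)+1 by omega, Finset.sum_range_succ']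
    have h0 : (Nat.choose (m+0) (m+1) : ℝ) / (x^(M+1+1-0) * w^(m+2+0)) = 0 := by
      rw [Nat.choose_eq_zero_of_lt (by omega)]
      simp
    rw [h0, add_zero, Finset.mul_sum]
    refine Finset.sum_congr rfl fun j hj => ?_
    rw [show m+(j+1) = m+1+j by omega, show M+1+1-(j+1) = M+1-j by omega,
      show m+2+(j+1) = (m+2+j)+1 by omega, pow_succ]
    have h1 : x^(M+1-j) ≠ 0 := pow_ne_zero _ hxne
    have h2 : w^(m+2+j) ≠ 0 := pow_ne_zero _ hwne
    field_simp
  rw [hsplit, ← hA, ← hB]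
  ring

lemma pfrac' (u v : ℝ) (hu : 0 < u) (hv : 0 < v) : ∀ A B : ℕ,
    1/(u^(A+1) * v^(B+1)) =
      (∑ j ∈ range (A+1), (Nat.choose (B+j) B : ℝ) / (u^(A+1-j) * (u+v)^(B+1+j))) +
      (∑ j ∈ range (B+1), (Nat.choose (A+j) A : ℝ) / (v^(B+1-j) * (u+v)^(A+1+j))) := by
  have hw : 0 < u + v := by linarith
  intro A
  induction A with
  | zero =>
    intro B
    have := pfrac0 u v hu hv B
    simp only [Nat.choose_self, Nat.choose_zero_right, Nat.cast_one, zero_add, pow_one] at *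
    rw [this]
    norm_num
  | succ A ihA =>
    intro B
    induction B with
    | zero =>
      have := pfrac0 v u hv hu (A+1)
      rw [add_comm v u] at this
      rw [mul_comm] at this
      simp only [Nat.choose_self, Nat.choose_zero_right, Nat.cast_one, zero_add, pow_one] at *
      rw [this]
      norm_num
      ring
    | succ B ihB =>
      have key : 1/(u^(A+1+1) * v^(B+1+1)) =
          (1/(u+v)) * (1/(u^(A+1) * v^(B+1+1))) + (1/(u+v)) * (1/(u^(A+1+1) * v^(B+1))) := by
        have h1 : u^(A+1+1) = u^(A+1) * u := by rw [pow_succ]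
        have h2 : v^(B+1+1) = v^(B+1) * v := by rw [pow_succ]
        rw [h1, h2]
        field_simp
      rw [key, ihA (B+1), ihB, mul_add, mul_add]
      have hT1 := sum_step u (u+v) hu hw B A
      have hT2 := sum_step v (u+v) hv hw A B
      have e1 : ∀ j ∈ range (A+1+1), (Nat.choose (B+1+j) (B+1) : ℝ) / (u^(A+1+1-j) * (u+v)^(B+1+1+j))
          = (Nat.choose (B+1+j) (B+1) : ℝ) / (u^(A+2-j) * (u+v)^(B+2+j)) := by
        intro j _; norm_num
      have e2 : ∀ j ∈ range (B+1+1), (Nat.choose (A+1+j) (A+1) : ℝ) / (v^(B+1+1-j) * (u+v)^(A+1+1+j))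
          = (Nat.choose (A+1+j) (A+1) : ℝ) / (v^(B+2-j) * (u+v)^(A+2+j)) := by
        intro j _; norm_num
      rw [Finset.sum_congr rfl e1, Finset.sum_congr rfl e2]
      rw [← hT1, ← hT2]
      rw [Finset.mul_sum, Finset.mul_sum, Finset.mul_sum, Finset.mul_sum]
      have f1 : ∀ j ∈ range (A+1), (1/(u+v)) * ((Nat.choose (B+1+j) (B+1) : ℝ) / (u^(A+1-j) * (u+v)^(B+1+1+j)))
          = (1/(u+v)) * ((Nat.choose (B+1+j) (B+1) : ℝ) / (u^(A+1-j) * (u+v)^(B+2+j))) := by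
        intro j _; norm_num
      have f2 : ∀ j ∈ range (B+1+1), (1/(u+v)) * ((Nat.choose (A+j) A : ℝ) / (v^(B+1+1-j) * (u+v)^(A+1+j)))
          = (1/(u+v)) * ((Nat.choose (A+j) A : ℝ) / (v^(B+2-j) * (u+v)^(A+1+j))) := by
        intro j _; norm_num
      have f3 : ∀ j ∈ range (A+1+1), (1/(u+v)) * ((Nat.choose (B+j) B : ℝ) / (u^(A+1+1-j) * (u+v)^(B+1+j)))
          = (1/(u+v)) * ((Nat.choose (B+j) B : ℝ) / (u^(A+2-j) * (u+v)^(B+1+j))) := by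
        intro j _; norm_num
      have f4 : ∀ j ∈ range (B+1), (1/(u+v)) * ((Nat.choose (A+1+j) (A+1) : ℝ) / (v^(B+1-j) * (u+v)^(A+1+1+j)))
          = (1/(u+v)) * ((Nat.choose (A+1+j) (A+1) : ℝ) / (v^(B+1-j) * (u+v)^(A+2+j))) := by
        intro j _; norm_num
      rw [Finset.sum_congr rfl f1, Finset.sum_congr rfl f2, Finset.sum_congr rfl f3,
        Finset.sum_congr rfl f4]
      ring

lemma conv_sum (x w : ℝ) (A B : ℕ) :
    ∑ i ∈ Finset.Icc 1 (A+1), (Nat.choose (A+B+1-i) B : ℝ) / (x^i * w^(A+B+2-i)) =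
    ∑ j ∈ range (A+1), (Nat.choose (B+j) B : ℝ) / (x^(A+1-j) * w^(B+1+j)) := by
  rw [← Finset.Ico_add_one_right_eq_Icc, Finset.sum_Ico_eq_sum_range]
  rw [← Finset.sum_range_reflect (fun j => (Nat.choose (B+j) B : ℝ) / (x^(A+1-j) * w^(B+1+j))) (A+1)]
  have hr : A+1+1-1 = A+1 := by omega
  rw [hr]
  refine Finset.sum_congr rfl fun j hj => ?_
  simp only [mem_range] at hj
  rw [show A+B+1-(1+j) = B+(A+1-1-j) by omega,
    show A+1-(A+1-1-j) = 1+j by omega,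
    show A+B+2-(1+j) = B+1+(A+1-1-j) by omega]

lemma pfrac (u v : ℝ) (hu : 0 < u) (hv : 0 < v) (a b : ℕ) (ha : 1 ≤ a) (hb : 1 ≤ b) :
    1/(u^a * v^b) =
      (∑ i ∈ Finset.Icc 1 a, (Nat.choose (a+b-i-1) (b-1) : ℝ) / (u^i * (u+v)^(a+b-i))) +
      (∑ i ∈ Finset.Icc 1 b, (Nat.choose (a+b-i-1) (a-1) : ℝ) / (v^i * (u+v)^(a+b-i))) := by
  obtain ⟨A, rfl⟩ : ∃ A, a = A+1 := ⟨a-1, by omega⟩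
  obtain ⟨B, rfl⟩ : ∃ B, b = B+1 := ⟨b-1, by omega⟩
  have e1 : ∀ i ∈ Finset.Icc 1 (A+1), (Nat.choose (A+1+(B+1)-i-1) (B+1-1) : ℝ) / (u^i * (u+v)^(A+1+(B+1)-i))
      = (Nat.choose (A+B+1-i) B : ℝ) / (u^i * (u+v)^(A+B+2-i)) := by
    intro i hi
    simp only [Finset.mem_Icc] at hi
    rw [show A+1+(B+1)-i-1 = A+B+1-i by omega, show B+1-1 = B by omega,
      show A+1+(B+1)-i = A+B+2-i by omega]
  have e2 : ∀ i ∈ Finset.Icc 1 (B+1), (Nat.choose (A+1+(B+1)-i-1) (A+1-1) : ℝ) / (v^i * (u+v)^(A+1+(B+1)-i))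
      = (Nat.choose (B+A+1-i) A : ℝ) / (v^i * (u+v)^(B+A+2-i)) := by
    intro i hi
    simp only [Finset.mem_Icc] at hi
    rw [show A+1+(B+1)-i-1 = B+A+1-i by omega, show A+1-1 = A by omega,
      show A+1+(B+1)-i = B+A+2-i by omega]
  rw [Finset.sum_congr rfl e1, Finset.sum_congr rfl e2, conv_sum u (u+v) A B,
    conv_sum v (u+v) B A]
  exact pfrac' u v hu hv A B


noncomputable def T6 (t₁ t₂ t₃ t₄ t₅ t₆ : ℝ) (p : ℕ × ℕ × ℕ) : ℝ :=
  1 / ((p.1 + 1 : ℝ) ^ t₁ * (p.2.1 + 1 : ℝ) ^ t₂ * (p.2.2 + 1 : ℝ) ^ t₃ *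
    (p.1 + p.2.1 + 2 : ℝ) ^ t₄ * (p.2.1 + p.2.2 + 2 : ℝ) ^ t₅ *
    (p.1 + p.2.1 + p.2.2 + 3 : ℝ) ^ t₆)

lemma summable_g1 : Summable (fun n : ℕ => 1/((n:ℝ)+1)^2) := by
  have h := (summable_nat_add_iff (f := fun n : ℕ => 1/((n:ℝ))^2) 1).2
    (Real.summable_one_div_nat_pow.2 one_lt_two)
  refine h.congr fun n => ?_
  push_cast
  ring

lemma summable_master :
    Summable (fun p : ℕ × ℕ × ℕ =>
      (1/((p.1:ℝ)+1)^2) * ((1/((p.2.1:ℝ)+1)^2) * (1/((p.2.2:ℝ)+1)^2))) := by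
  have h1 := summable_g1
  have hnn : (0 : ℕ → ℝ) ≤ fun n : ℕ => 1/((n:ℝ)+1)^2 := fun n => by positivity
  have h2 : Summable (fun q : ℕ × ℕ => (1/((q.1:ℝ)+1)^2) * (1/((q.2:ℝ)+1)^2)) :=
    Summable.mul_of_nonneg (f := fun n : ℕ => 1/((n:ℝ)+1)^2) (g := fun n : ℕ => 1/((n:ℝ)+1)^2) h1 h1 hnn hnn
  have h3 : (0 : ℕ × ℕ → ℝ) ≤ fun q : ℕ × ℕ => (1/((q.1:ℝ)+1)^2) * (1/((q.2:ℝ)+1)^2) :=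
    fun q => by positivity
  exact Summable.mul_of_nonneg (f := fun n : ℕ => 1/((n:ℝ)+1)^2)
    (g := fun q : ℕ × ℕ => (1/((q.1:ℝ)+1)^2) * (1/((q.2:ℝ)+1)^2)) h1 h2 hnn h3

lemma T6_nonneg (t₁ t₂ t₃ t₄ t₅ t₆ : ℝ) (p : ℕ × ℕ × ℕ) : 0 ≤ T6 t₁ t₂ t₃ t₄ t₅ t₆ p := by
  unfold T6
  have h1 : (0:ℝ) < p.1 + 1 := by positivity
  have h2 : (0:ℝ) < p.2.1 + 1 := by positivity
  have h3 : (0:ℝ) < p.2.2 + 1 := by positivity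
  have h4 : (0:ℝ) < p.1 + p.2.1 + 2 := by positivity
  have h5 : (0:ℝ) < p.2.1 + p.2.2 + 2 := by positivity
  have h6 : (0:ℝ) < p.1 + p.2.1 + p.2.2 + 3 := by positivity
  positivity

lemma bound_aux (t₁ t₂ t₃ t₄ t₅ t₆ : ℝ) (h1 : 0 ≤ t₁) (h2 : 0 ≤ t₂) (h3 : 2 ≤ t₃)
    (h4 : 2 ≤ t₄) (h5 : 0 ≤ t₅) (h6 : 2 ≤ t₆) (X Y Z : ℝ)
    (hX : 1 ≤ X) (hY : 1 ≤ Y) (hZ : 1 ≤ Z) :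
    1/(X ^ t₁ * Y ^ t₂ * Z ^ t₃ * (X+Y) ^ t₄ * (Y+Z) ^ t₅ * (X+Y+Z) ^ t₆) ≤
      (1/X^2) * ((1/Y^2) * (1/Z^2)) := by
  have hX0 : (0:ℝ) < X := by linarith
  have hY0 : (0:ℝ) < Y := by linarith
  have hZ0 : (0:ℝ) < Z := by linarith
  have hrhs : (1/X^2) * ((1/Y^2) * (1/Z^2)) = 1/(X^2 * (Y^2 * Z^2)) := by
    field_simp
  rw [hrhs]
  apply one_div_le_one_div_of_le
  · positivity
  · have b1 : (1:ℝ) ≤ X ^ t₁ := Real.one_le_rpow hX h1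
    have b2 : (1:ℝ) ≤ Y ^ t₂ := Real.one_le_rpow hY h2
    have b3 : Z^2 ≤ Z ^ t₃ := by
      calc Z^2 = Z ^ (2:ℝ) := by rw [Real.rpow_two]
      _ ≤ Z ^ t₃ := Real.rpow_le_rpow_of_exponent_le hZ h3
    have b4 : X * Y ≤ (X+Y) ^ t₄ := by
      calc X * Y ≤ (X+Y)^2 := by nlinarith
      _ = (X+Y) ^ (2:ℝ) := by rw [Real.rpow_two]
      _ ≤ (X+Y) ^ t₄ := Real.rpow_le_rpow_of_exponent_le (by linarith) h4
    have b5 : (1:ℝ) ≤ (Y+Z) ^ t₅ := Real.one_le_rpow (by linarith) h5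
    have b6 : X * Y ≤ (X+Y+Z) ^ t₆ := by
      calc X * Y ≤ (X+Y+Z)^2 := by nlinarith
      _ = (X+Y+Z) ^ (2:ℝ) := by rw [Real.rpow_two]
      _ ≤ (X+Y+Z) ^ t₆ := Real.rpow_le_rpow_of_exponent_le (by linarith) h6
    have p1 : (0:ℝ) ≤ X ^ t₁ := le_trans zero_le_one b1
    have p2 : (0:ℝ) ≤ Y ^ t₂ := le_trans zero_le_one b2
    have p3 : (0:ℝ) ≤ Z ^ t₃ := le_trans (by positivity) b3
    have p4 : (0:ℝ) ≤ (X+Y) ^ t₄ := le_trans (by positivity) b4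
    have p5 : (0:ℝ) ≤ (Y+Z) ^ t₅ := le_trans zero_le_one b5
    calc X^2 * (Y^2 * Z^2) = 1 * 1 * Z^2 * (X*Y) * 1 * (X*Y) := by ring
    _ ≤ X ^ t₁ * Y ^ t₂ * Z ^ t₃ * (X+Y) ^ t₄ * (Y+Z) ^ t₅ * (X+Y+Z) ^ t₆ := by
        apply mul_le_mul _ b6 (by positivity) (by positivity)
        apply mul_le_mul _ b5 zero_le_one (by positivity)
        apply mul_le_mul _ b4 (by positivity) (by positivity)
        apply mul_le_mul _ b3 (by positivity) (by positivity)
        exact mul_le_mul b1 b2 zero_le_one p1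

lemma T6_le (t₁ t₂ t₃ t₄ t₅ t₆ : ℝ) (h1 : 0 ≤ t₁) (h2 : 0 ≤ t₂) (h3 : 2 ≤ t₃)
    (h4 : 2 ≤ t₄) (h5 : 0 ≤ t₅) (h6 : 2 ≤ t₆) (p : ℕ × ℕ × ℕ) :
    T6 t₁ t₂ t₃ t₄ t₅ t₆ p ≤ (1/((p.1:ℝ)+1)^2) * ((1/((p.2.1:ℝ)+1)^2) * (1/((p.2.2:ℝ)+1)^2)) := by
  unfold T6
  rw [show ((p.1:ℝ) + (p.2.1:ℝ) + 2) = ((p.1:ℝ)+1) + ((p.2.1:ℝ)+1) by ring,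
    show ((p.2.1:ℝ) + (p.2.2:ℝ) + 2) = ((p.2.1:ℝ)+1) + ((p.2.2:ℝ)+1) by ring,
    show ((p.1:ℝ) + (p.2.1:ℝ) + (p.2.2:ℝ) + 3) = ((p.1:ℝ)+1) + ((p.2.1:ℝ)+1) + ((p.2.2:ℝ)+1) by ring]
  exact bound_aux t₁ t₂ t₃ t₄ t₅ t₆ h1 h2 h3 h4 h5 h6 _ _ _
    (by simp) (by simp) (by simp)

lemma T6_summable (t₁ t₂ t₃ t₄ t₅ t₆ : ℝ) (h1 : 0 ≤ t₁) (h2 : 0 ≤ t₂) (h3 : 2 ≤ t₃)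
    (h4 : 2 ≤ t₄) (h5 : 0 ≤ t₅) (h6 : 2 ≤ t₆) : Summable (T6 t₁ t₂ t₃ t₄ t₅ t₆) :=
  Summable.of_nonneg_of_le (T6_nonneg t₁ t₂ t₃ t₄ t₅ t₆)
    (T6_le t₁ t₂ t₃ t₄ t₅ t₆ h1 h2 h3 h4 h5 h6) summable_master

lemma T6_pointwise (a b : ℕ) (ha : 1 ≤ a) (hb : 1 ≤ b) (s₁ s₂ s₃ : ℝ) (p : ℕ × ℕ × ℕ) :
    T6 a 0 s₂ s₁ b s₃ p =
      (∑ i ∈ Finset.Icc 1 a, (Nat.choose (a+b-i-1) (b-1) : ℝ) *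
        T6 i 0 s₂ s₁ 0 (s₃ + a + b - i) p) +
      (∑ i ∈ Finset.Icc 1 b, (Nat.choose (a+b-i-1) (a-1) : ℝ) *
        T6 0 0 s₂ s₁ i (s₃ + a + b - i) p) := by
  obtain ⟨n₁, n₂, n₃⟩ := p
  have hu : (0:ℝ) < (n₁:ℝ)+1 := by positivity
  have hv : (0:ℝ) < (n₂:ℝ)+(n₃:ℝ)+2 := by positivity
  have hw : (0:ℝ) < (n₁:ℝ)+(n₂:ℝ)+(n₃:ℝ)+3 := by positivity
  have key := pfrac ((n₁:ℝ)+1) ((n₂:ℝ)+(n₃:ℝ)+2) hu hv a b ha hb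
  have lhs_eq : T6 a 0 s₂ s₁ b s₃ (n₁, n₂, n₃) =
      (1/(((n₁:ℝ)+1)^a * ((n₂:ℝ)+(n₃:ℝ)+2)^b)) *
      (1/(((n₃:ℝ)+1)^s₂ * ((n₁:ℝ)+(n₂:ℝ)+2)^s₁ * ((n₁:ℝ)+(n₂:ℝ)+(n₃:ℝ)+3)^s₃)) := by
    unfold T6
    rw [div_mul_div_comm, mul_one]
    rw [Real.rpow_natCast, Real.rpow_natCast, Real.rpow_zero]
    congr 1
    ring
  rw [lhs_eq, key, add_mul, Finset.sum_mul, Finset.sum_mul]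
  congr 1
  · refine Finset.sum_congr rfl fun i hi => ?_
    simp only [Finset.mem_Icc] at hi
    have hiab : i ≤ a + b := by omega
    have hcast : s₃ + (a:ℝ) + (b:ℝ) - (i:ℝ) = s₃ + ((a+b-i : ℕ):ℝ) := by
      rw [Nat.cast_sub hiab]
      push_cast
      ring
    unfold T6
    rw [hcast, Real.rpow_add hw, Real.rpow_natCast, Real.rpow_natCast, Real.rpow_zero,
      Real.rpow_zero]
    rw [show ((n₁:ℝ)+1)+((n₂:ℝ)+(n₃:ℝ)+2) = (n₁:ℝ)+(n₂:ℝ)+(n₃:ℝ)+3 by ring]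
    rw [div_mul_div_comm, mul_one, mul_one_div]
    congr 1
    ring
  · refine Finset.sum_congr rfl fun i hi => ?_
    simp only [Finset.mem_Icc] at hi
    have hiab : i ≤ a + b := by omega
    have hcast : s₃ + (a:ℝ) + (b:ℝ) - (i:ℝ) = s₃ + ((a+b-i : ℕ):ℝ) := by
      rw [Nat.cast_sub hiab]
      push_cast
      ring
    unfold T6
    rw [hcast, Real.rpow_add hw, Real.rpow_natCast, Real.rpow_natCast, Real.rpow_zero,
      Real.rpow_zero]
    rw [show ((n₁:ℝ)+1)+((n₂:ℝ)+(n₃:ℝ)+2) = (n₁:ℝ)+(n₂:ℝ)+(n₃:ℝ)+3 by ring]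
    rw [div_mul_div_comm, mul_one, mul_one_div]
    congr 1
    ring

lemma witten_eq (t₁ t₂ t₃ t₄ t₅ t₆ : ℝ) (h : Summable (T6 t₁ t₂ t₃ t₄ t₅ t₆)) :
    wittenSl4R t₁ t₂ t₃ t₄ t₅ t₆ = ∑' p : ℕ × ℕ × ℕ, T6 t₁ t₂ t₃ t₄ t₅ t₆ p := by
  rw [wittenSl4R, Summable.tsum_prod h]
  refine tsum_congr fun n₁ => ?_
  rw [Summable.tsum_prod (h.prod_factor n₁)]
  rfl


theorem eq10 (a b : ℕ) (ha : 1 ≤ a) (hb : 1 ≤ b) (s₁ s₂ s₃ : ℝ)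
    (h₁ : 2 ≤ s₁) (h₂ : 2 ≤ s₂) (h₃ : 2 ≤ s₃) :
    wittenSl4R a 0 s₂ s₁ b s₃ =
      (∑ i ∈ Finset.Icc 1 a, (Nat.choose (a + b - i - 1) (b - 1) : ℝ) *
        wittenSl4R i 0 s₂ s₁ 0 (s₃ + a + b - i)) +
      (∑ i ∈ Finset.Icc 1 b, (Nat.choose (a + b - i - 1) (a - 1) : ℝ) *
        wittenSl4R 0 0 s₂ s₁ i (s₃ + a + b - i)) := by
  have hL : Summable (T6 a 0 s₂ s₁ b s₃) :=
    T6_summable _ _ _ _ _ _ (Nat.cast_nonneg a) le_rfl h₂ h₁ (Nat.cast_nonneg b) h₃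
  have hS1 : ∀ i ∈ Finset.Icc 1 a, Summable (T6 i 0 s₂ s₁ 0 (s₃ + a + b - i)) := by
    intro i hi
    simp only [Finset.mem_Icc] at hi
    have hab : (i:ℝ) ≤ (a:ℝ) + (b:ℝ) := by
      have : (i:ℝ) ≤ (a:ℝ) := Nat.cast_le.2 hi.2
      have : (0:ℝ) ≤ (b:ℝ) := Nat.cast_nonneg b
      linarith
    exact T6_summable _ _ _ _ _ _ (Nat.cast_nonneg i) le_rfl h₂ h₁ le_rfl (by linarith)
  have hS2 : ∀ i ∈ Finset.Icc 1 b, Summable (T6 0 0 s₂ s₁ i (s₃ + a + b - i)) := by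
    intro i hi
    simp only [Finset.mem_Icc] at hi
    have hab : (i:ℝ) ≤ (a:ℝ) + (b:ℝ) := by
      have : (i:ℝ) ≤ (b:ℝ) := Nat.cast_le.2 hi.2
      have : (0:ℝ) ≤ (a:ℝ) := Nat.cast_nonneg a
      linarith
    exact T6_summable _ _ _ _ _ _ le_rfl le_rfl h₂ h₁ (Nat.cast_nonneg i) (by linarith)
  have hsum1 : Summable (fun p : ℕ × ℕ × ℕ => ∑ i ∈ Finset.Icc 1 a,
      (Nat.choose (a+b-i-1) (b-1) : ℝ) * T6 i 0 s₂ s₁ 0 (s₃ + a + b - i) p) :=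
    summable_sum fun i hi => (hS1 i hi).mul_left _
  have hsum2 : Summable (fun p : ℕ × ℕ × ℕ => ∑ i ∈ Finset.Icc 1 b,
      (Nat.choose (a+b-i-1) (a-1) : ℝ) * T6 0 0 s₂ s₁ i (s₃ + a + b - i) p) :=
    summable_sum fun i hi => (hS2 i hi).mul_left _
  rw [witten_eq _ _ _ _ _ _ hL,
    tsum_congr (T6_pointwise a b ha hb s₁ s₂ s₃),
    Summable.tsum_add hsum1 hsum2,
    Summable.tsum_finsetSum (fun i hi => (hS1 i hi).mul_left _),
    Summable.tsum_finsetSum (fun i hi => (hS2 i hi).mul_left _)]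
  congr 1
  · refine Finset.sum_congr rfl fun i hi => ?_
    rw [tsum_mul_left, witten_eq _ _ _ _ _ _ (hS1 i hi)]
  · refine Finset.sum_congr rfl fun i hi => ?_
    rw [tsum_mul_left, witten_eq _ _ _ _ _ _ (hS2 i hi)]
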